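/- Let S be symmetric, M symmetric positive definite, and let (λ, Φ) with MΦ ≠ 0 satisfy the residual bound ‖SΦ - λMΦ‖_{M^{-1}} ≤ ε‖SΦ‖_{M^{-1}}. If λ ≠ 0 and ε < 1, then there exists a true generalized eigenvalue λ_i of (S, M) with |λ_i - λ| ≤ ε‖SΦ‖_{M^{-1}} / ‖MΦ‖_{M^{-1}}. -/

import Mathlib

open Matrix

private lemma dot_trans {n : ℕ} (B : Matrix (Fin n) (Fin n) ℝ) (v w : Fin n → ℝ) :
    v ⬝ᵥ (B *ᵥ w) = (Bᵀ *ᵥ v) ⬝ᵥ w := by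
  rw [dotProduct_mulVec, mulVec_transpose]

/-- Key spectral lemma: for a symmetric matrix there is an eigenvalue within
the relative residual distance of any approximate eigenvalue. -/
private lemma key_spectral {n : ℕ} [NeZero n] (A : Matrix (Fin n) (Fin n) ℝ)
    (hA : A.IsHermitian) (lam : ℝ) (y : Fin n → ℝ) :
    ∃ mu : ℝ, (A - mu • 1).det = 0 ∧
      |mu - lam| * Real.sqrt (y ⬝ᵥ y) ≤
        Real.sqrt ((A *ᵥ y - lam • y) ⬝ᵥ (A *ᵥ y - lam • y)) := by
  set U : Matrix (Fin n) (Fin n) ℝ := (hA.eigenvectorUnitary : Matrix (Fin n) (Fin n) ℝ) with hU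
  have hUT : star U = Uᵀ := by
    ext i j; simp [Matrix.star_apply]
  have h2 : U * Uᵀ = 1 := by rw [← hUT]; exact Unitary.coe_mul_star_self _
  have hdot : ∀ a : Fin n → ℝ, (Uᵀ *ᵥ a) ⬝ᵥ (Uᵀ *ᵥ a) = a ⬝ᵥ a := by
    intro a
    rw [dot_trans, transpose_transpose, mulVec_mulVec, h2, one_mulVec]
  set μ := hA.eigenvalues with hμ
  set c := Uᵀ *ᵥ y with hc0
  have hDU : Uᵀ * A = diagonal μ * Uᵀ := by
    have h3 : Uᵀ * A * U = diagonal μ := by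
      have := hA.conjStarAlgAut_star_eigenvectorUnitary
      rw [Unitary.conjStarAlgAut_star_apply] at this
      rw [hUT] at this
      simpa using this
    calc Uᵀ * A = Uᵀ * A * (U * Uᵀ) := by rw [h2, Matrix.mul_one]
      _ = (Uᵀ * A * U) * Uᵀ := by simp only [Matrix.mul_assoc]
      _ = diagonal μ * Uᵀ := by rw [h3]
  have hc : Uᵀ *ᵥ (A *ᵥ y - lam • y) = fun i => (μ i - lam) * c i := by
    funext i
    rw [mulVec_sub, mulVec_smul, mulVec_mulVec, hDU, ← mulVec_mulVec]
    simp [mulVec_diagonal, sub_mul, ← hc0]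
  obtain ⟨i₀, -, hmin⟩ := Finset.exists_min_image Finset.univ
    (fun i => |μ i - lam|) ⟨Classical.arbitrary (Fin n), Finset.mem_univ _⟩
  refine ⟨μ i₀, ?_, ?_⟩
  · rw [← Matrix.exists_mulVec_eq_zero_iff]
    refine ⟨⇑(hA.eigenvectorBasis i₀), ?_, ?_⟩
    · intro h
      refine hA.eigenvectorBasis.orthonormal.ne_zero i₀ ?_
      ext j
      exact congrFun h j
    · rw [sub_mulVec, hA.mulVec_eigenvectorBasis, smul_mulVec, one_mulVec, sub_self]
  · have sum1 : (A *ᵥ y - lam • y) ⬝ᵥ (A *ᵥ y - lam • y)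
        = ∑ i, ((μ i - lam) * c i) * ((μ i - lam) * c i) := by
      rw [← hdot (A *ᵥ y - lam • y), hc]
      rfl
    have sum2 : y ⬝ᵥ y = ∑ i, c i * c i := by
      rw [← hdot y]
      rfl
    have hge : (μ i₀ - lam) ^ 2 * ∑ i, c i * c i
        ≤ ∑ i, ((μ i - lam) * c i) * ((μ i - lam) * c i) := by
      rw [Finset.mul_sum]
      refine Finset.sum_le_sum fun i _ => ?_
      have h1 : |μ i₀ - lam| ≤ |μ i - lam| := hmin i (Finset.mem_univ i)
      have h2 : (μ i₀ - lam) ^ 2 ≤ (μ i - lam) ^ 2 := by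
        rw [← sq_abs, ← sq_abs (μ i - lam)]
        exact pow_le_pow_left₀ (abs_nonneg _) h1 2
      nlinarith [mul_self_nonneg (c i)]
    calc |μ i₀ - lam| * Real.sqrt (y ⬝ᵥ y)
        = Real.sqrt ((μ i₀ - lam) ^ 2 * (y ⬝ᵥ y)) := by
          rw [Real.sqrt_mul (sq_nonneg _), Real.sqrt_sq_eq_abs]
      _ ≤ Real.sqrt ((A *ᵥ y - lam • y) ⬝ᵥ (A *ᵥ y - lam • y)) := by
          apply Real.sqrt_le_sqrt
          rw [sum1, sum2]
          exact hge

/-- The residual convergence test of SIM in the `M⁻¹`-norm guarantees the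
existence of a true generalized eigenvalue close to the approximate one. -/
theorem residual_bound_implies_eigenvalue_bound {n : ℕ}
    (S M : Matrix (Fin n) (Fin n) ℝ) (hS : S.IsSymm) (hM : M.PosDef)
    (lam ε : ℝ) (Φ : Fin n → ℝ)
    (normMinv : (Fin n → ℝ) → ℝ)
    (hnorm : ∀ v, normMinv v = Real.sqrt (v ⬝ᵥ (M⁻¹ *ᵥ v)))
    (hMΦ : M *ᵥ Φ ≠ 0)
    (hres : normMinv (S *ᵥ Φ - lam • (M *ᵥ Φ)) ≤ ε * normMinv (S *ᵥ Φ))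
    (hlam : lam ≠ 0) (hε : ε < 1) :
    ∃ lami : ℝ, (S - lami • M).det = 0 ∧
      |lami - lam| ≤ ε * normMinv (S *ᵥ Φ) / normMinv (M *ᵥ Φ) := by
  have hn : NeZero n := ⟨by rintro rfl; exact hMΦ (funext fun i => i.elim0)⟩
  set R := (open scoped MatrixOrder in CFC.sqrt M) with hRdef
  have hRR : R * R = M := by open scoped MatrixOrder in exact CFC.sqrt_mul_sqrt_self M hM.posSemidef.nonneg
  have hRdet : IsUnit R.det := by
    rw [isUnit_iff_ne_zero]
    intro h
    have : M.det = R.det * R.det := by rw [← hRR, det_mul]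
    rw [h, mul_zero] at this
    exact hM.det_pos.ne' this
  have hRsym : Rᵀ = R := by open scoped MatrixOrder in exact (CFC.sqrt_nonneg M).posSemidef.1
  have hRinv_sym : (R⁻¹)ᵀ = R⁻¹ := by rw [transpose_nonsing_inv, hRsym]
  have hMinv : M⁻¹ = R⁻¹ * R⁻¹ := by rw [← hRR, Matrix.mul_inv_rev]
  set A := R⁻¹ * S * R⁻¹ with hAdef
  have hA : A.IsHermitian := by
    show Aᵀ = A
    rw [hAdef, transpose_mul, transpose_mul, hRinv_sym, hS.eq, Matrix.mul_assoc]
  have hq : ∀ v, normMinv v = Real.sqrt ((R⁻¹ *ᵥ v) ⬝ᵥ (R⁻¹ *ᵥ v)) := by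
    intro v
    rw [hnorm, hMinv, ← mulVec_mulVec, dot_trans, hRinv_sym]
  set y := R *ᵥ Φ with hydef
  have hinvM : R⁻¹ * M = R := by
    rw [← hRR, ← Matrix.mul_assoc, Matrix.nonsing_inv_mul _ hRdet, Matrix.one_mul]
  have hy1 : R⁻¹ *ᵥ (M *ᵥ Φ) = y := by rw [mulVec_mulVec, hinvM]
  have hy0 : y ≠ 0 := by
    intro h
    apply hMΦ
    have : M *ᵥ Φ = R *ᵥ y := by rw [hydef, mulVec_mulVec, hRR]
    rw [this, h, mulVec_zero]
  have hyy_pos : 0 < y ⬝ᵥ y := by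
    rcases lt_or_eq_of_le (Finset.sum_nonneg fun i _ => mul_self_nonneg (y i) :
      (0:ℝ) ≤ y ⬝ᵥ y) with h | h
    · exact h
    · exact absurd (dotProduct_self_eq_zero.mp h.symm) hy0
  have hqy_pos : 0 < Real.sqrt (y ⬝ᵥ y) := Real.sqrt_pos.mpr hyy_pos
  have hres' : A *ᵥ y - lam • y = R⁻¹ *ᵥ (S *ᵥ Φ - lam • (M *ᵥ Φ)) := by
    rw [mulVec_sub, mulVec_smul, hy1]
    congr 1
    rw [hydef, mulVec_mulVec, hAdef, Matrix.mul_assoc, Matrix.mul_assoc,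
      Matrix.nonsing_inv_mul _ hRdet, Matrix.mul_one, ← mulVec_mulVec]
  obtain ⟨mu, hdet, hineq⟩ := key_spectral A hA lam y
  refine ⟨mu, ?_, ?_⟩
  · have hSM : S - mu • M = R * (A - mu • 1) * R := by
      rw [Matrix.mul_sub, Matrix.sub_mul]
      congr 1
      · calc S = (R * R⁻¹) * S * (R⁻¹ * R) := by
              rw [Matrix.mul_nonsing_inv _ hRdet, Matrix.nonsing_inv_mul _ hRdet,
                Matrix.one_mul, Matrix.mul_one]
          _ = R * (R⁻¹ * S * R⁻¹) * R := by simp only [Matrix.mul_assoc]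
          _ = R * A * R := by rw [hAdef]
      · rw [Matrix.mul_smul, Matrix.smul_mul, Matrix.mul_one, hRR]
    rw [hSM, det_mul, det_mul, hdet, mul_zero, zero_mul]
  · rw [hq (M *ᵥ Φ), hy1, div_eq_mul_inv, ← div_eq_mul_inv, le_div_iff₀ hqy_pos]
    calc |mu - lam| * Real.sqrt (y ⬝ᵥ y)
        ≤ Real.sqrt ((A *ᵥ y - lam • y) ⬝ᵥ (A *ᵥ y - lam • y)) := hineq
      _ = normMinv (S *ᵥ Φ - lam • (M *ᵥ Φ)) := by rw [hq, hres']
      _ ≤ ε * normMinv (S *ᵥ Φ) := hres
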